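/- Fix α with 0 < α < 2 and a natural number h ≥ 1. Then the Slicer Map auto-correlation φ(m + h, m) is asymptotic to (4/(2−α)) m^(2−α) as m → ∞. -/

import Mathlib

open Filter Topology

/-- ℓ⁺_m(α) = 1 - (m + 2^(1/α))^(-α) -/
noncomputable def ellp (α : ℝ) (m : ℕ) : ℝ := 1 - ((m : ℝ) + (2 : ℝ) ^ (1/α)) ^ (-α)

/-- Δ_k(α) = ℓ⁺_k(α) - ℓ⁺_{k-1}(α) -/
noncomputable def Dlt (α : ℝ) (k : ℕ) : ℝ := ellp α k - ellp α (k - 1)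

/-- Position-position auto-correlation of the Slicer Map, for times m ≤ n. -/
noncomputable def phi (α : ℝ) (n m : ℕ) : ℝ :=
  2 * ∑ k ∈ Finset.Icc 1 m, (k : ℝ) ^ 2 * Dlt α k
    + 2 * m * ∑ k ∈ Finset.Icc (m + 1) n, (k : ℝ) * Dlt α k
    + 2 * m * n * ∑' k : ℕ, Dlt α (n + 1 + k)

section SlicerAux

open Finset Asymptotics


lemma aux_ratio (a b : ℝ) :
    Tendsto (fun m : ℕ => ((m : ℝ) + a) / ((m : ℝ) + b)) atTop (𝓝 1) := by
  have hb : Tendsto (fun m : ℕ => (m : ℝ) + b) atTop atTop :=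
    tendsto_atTop_add_const_right _ b tendsto_natCast_atTop_atTop
  have h0 : Tendsto (fun m : ℕ => 1 + (a - b) / ((m : ℝ) + b)) atTop (𝓝 (1 + 0)) :=
    (tendsto_const_nhds.div_atTop hb).const_add 1
  rw [add_zero] at h0
  apply h0.congr'
  filter_upwards [hb.eventually_gt_atTop 0] with m hm
  field_simp
  ring

lemma aux_rpow_ratio (a b p : ℝ) :
    Tendsto (fun m : ℕ => (((m : ℝ) + a) / ((m : ℝ) + b)) ^ p) atTop (𝓝 1) := by
  have := (Real.continuousAt_rpow_const 1 p (Or.inl one_ne_zero)).tendsto.comp (aux_ratio a b)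
  simpa [Function.comp_def] using this

lemma mvt_bound {α : ℝ} (hα : 0 < α) {x : ℝ} (hx : 0 < x) :
    x ^ (-α) - (x + 1) ^ (-α) ≤ α * x ^ (-α - 1) := by
  obtain ⟨ξ, hξ, hξ'⟩ := exists_hasDerivAt_eq_slope (fun y : ℝ => y ^ (-α))
      (fun y : ℝ => (-α) * y ^ (-α - 1)) (by linarith : x < x + 1)
      (fun y hy => (Real.continuousAt_rpow_const y (-α)
        (Or.inl (by nlinarith [hy.1] : y ≠ 0))).continuousWithinAt)
      (fun y hy => Real.hasDerivAt_rpow_const (Or.inl (by nlinarith [hy.1.le] : y ≠ 0)))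
  have hξx : x < ξ := hξ.1
  rw [add_sub_cancel_left, div_one] at hξ'
  have h1 : x ^ (-α) - (x + 1) ^ (-α) = α * ξ ^ (-α - 1) := by
    have := hξ'
    nlinarith [this]
  rw [h1]
  have h2 : ξ ^ (-α - 1) ≤ x ^ (-α - 1) :=
    Real.rpow_le_rpow_of_nonpos hx hξx.le (by linarith)
  nlinarith

lemma F_anti {α : ℝ} (hα : 0 < α) {x y : ℝ} (hx : 0 < x) (hxy : x ≤ y) :
    y ^ (-α) ≤ x ^ (-α) :=
  Real.rpow_le_rpow_of_nonpos hx hxy (by linarith)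

lemma abel_id (F : ℕ → ℝ) (m : ℕ) :
    ∑ i ∈ range m, ((i : ℝ) + 1) ^ 2 * (F i - F (i + 1))
      = (∑ i ∈ range m, (2 * (i : ℝ) + 1) * F i) - (m : ℝ) ^ 2 * F m := by
  induction m with
  | zero => simp
  | succ n ih => rw [sum_range_succ, sum_range_succ, ih]; push_cast; ring

lemma tsum_telescope {G : ℕ → ℝ} (hmono : ∀ k, G (k + 1) ≤ G k)
    (hlim : Tendsto G atTop (𝓝 0)) : ∑' k : ℕ, (G k - G (k + 1)) = G 0 := by
  have hanti : Antitone G := antitone_nat_of_succ_le hmono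
  have hGnn : ∀ k, 0 ≤ G k := fun k =>
    le_of_tendsto hlim (by filter_upwards [eventually_ge_atTop k] with j hj; exact hanti hj)
  have hpart : ∀ K, ∑ i ∈ range K, (G i - G (i + 1)) = G 0 - G K := fun K =>
    Finset.sum_range_sub' G K
  have hsummable : Summable fun k => G k - G (k + 1) := by
    apply summable_of_sum_range_le (fun k => sub_nonneg.2 (hmono k))
    intro K; rw [hpart]; linarith [hGnn K]
  refine tendsto_nhds_unique hsummable.hasSum.tendsto_sum_nat ?_
  have : Tendsto (fun K : ℕ => G 0 - G K) atTop (𝓝 (G 0 - 0)) := tendsto_const_nhds.sub hlim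
  rw [sub_zero] at this
  exact Tendsto.congr' (by filter_upwards with K; rw [hpart]) this

lemma key_sum {α : ℝ} (hα : 0 < α) (hα2 : α < 2) {c : ℝ} (hc : 0 < c) :
    Tendsto (fun m : ℕ =>
        (∑ i ∈ range m, (2 * (i : ℝ) + 1) * ((i : ℝ) + c) ^ (-α)) / (m : ℝ) ^ (2 - α))
      atTop (𝓝 (2 / (2 - α))) := by
  have hp : (0:ℝ) < 2 - α := by linarith
  set p : ℝ := 2 - α with hpdef
  set g : ℕ → ℝ := fun i => (2 * (i : ℝ) + 1) * ((i : ℝ) + c) ^ (-α) with hgdef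
  set b : ℕ → ℝ := fun i => (2 / p) * (((i : ℝ) + 1) ^ p - (i : ℝ) ^ p) with hbdef
  set w : ℕ → ℝ := fun i => 2 * (i : ℝ) ^ (1 - α) with hwdef
  have hbsum : ∀ m : ℕ, ∑ i ∈ range m, b i = (2 / p) * (m : ℝ) ^ p := by
    intro m
    rw [hbdef, ← Finset.mul_sum]
    congr 1
    have h := Finset.sum_range_sub (fun i : ℕ => (i : ℝ) ^ p) m
    simp only [Nat.cast_add, Nat.cast_one] at h
    rw [h]
    norm_num [Real.zero_rpow hp.ne']
  have hwne : ∀ᶠ i : ℕ in atTop, w i ≠ 0 := by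
    filter_upwards [eventually_ge_atTop 1] with i hi
    have : (0:ℝ) < (i:ℝ) := by exact_mod_cast hi
    positivity
  -- g ~ w
  have equiv1 : g ~[atTop] w := by
    rw [isEquivalent_iff_tendsto_one hwne]
    have ht : Tendsto (fun i : ℕ =>
        (((i:ℝ) + 1/2) / ((i:ℝ) + 0)) * ((((i:ℝ) + 0) / ((i:ℝ) + c)) ^ α)) atTop (𝓝 (1 * 1)) :=
      (aux_ratio (1/2) 0).mul (aux_rpow_ratio 0 c α)
    rw [mul_one] at ht
    apply ht.congr'
    filter_upwards [eventually_ge_atTop 1] with i hi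
    have hi0 : (0:ℝ) < (i:ℝ) := by exact_mod_cast hi
    have hic : (0:ℝ) < (i:ℝ) + c := by linarith
    have h1 : (i:ℝ) ^ (1 - α) = (i:ℝ) / (i:ℝ) ^ α := by
      rw [Real.rpow_sub hi0, Real.rpow_one]
    have h2 : ((i:ℝ) + c) ^ (-α) = (((i:ℝ) + c) ^ α)⁻¹ := by
      rw [Real.rpow_neg hic.le]
    have h3 : ((i:ℝ) / ((i:ℝ) + c)) ^ α = (i:ℝ) ^ α / ((i:ℝ) + c) ^ α :=
      Real.div_rpow hi0.le hic.le α
    have hia : (0:ℝ) < (i:ℝ) ^ α := Real.rpow_pos_of_pos hi0 α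
    have hica : (0:ℝ) < ((i:ℝ) + c) ^ α := Real.rpow_pos_of_pos hic α
    simp only [Pi.div_apply, hgdef, hwdef, add_zero]
    rw [h1, h2, h3]
    field_simp
  -- b ~ w
  have equiv2 : b ~[atTop] w := by
    rw [isEquivalent_iff_tendsto_one hwne]
    have hs : Tendsto (fun i : ℕ => (((i:ℝ) + 1) / ((i:ℝ) + 0)) ^ (p - 1)) atTop (𝓝 1) :=
      aux_rpow_ratio 1 0 (p - 1)
    have hmin : Tendsto (fun i : ℕ => min 1 ((((i:ℝ) + 1) / ((i:ℝ) + 0)) ^ (p - 1)))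
        atTop (𝓝 1) := by
      have := Tendsto.min (tendsto_const_nhds : Tendsto (fun _ : ℕ => (1:ℝ)) atTop (𝓝 1)) hs
      rwa [min_self] at this
    have hmax : Tendsto (fun i : ℕ => max 1 ((((i:ℝ) + 1) / ((i:ℝ) + 0)) ^ (p - 1)))
        atTop (𝓝 1) := by
      have := Tendsto.max (tendsto_const_nhds : Tendsto (fun _ : ℕ => (1:ℝ)) atTop (𝓝 1)) hs
      rwa [max_self] at this
    apply tendsto_of_tendsto_of_tendsto_of_le_of_le' hmin hmax
    all_goals {
      filter_upwards [eventually_ge_atTop 1] with i hi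
      have hi0 : (0:ℝ) < (i:ℝ) := by exact_mod_cast hi
      obtain ⟨ξ, hξ, hξ'⟩ := exists_hasDerivAt_eq_slope (fun y : ℝ => y ^ p)
          (fun y : ℝ => p * y ^ (p - 1)) (by linarith : (i:ℝ) < (i:ℝ) + 1)
          (fun y hy => (Real.continuousAt_rpow_const y p
            (Or.inl (by rcases hy with ⟨h1, _⟩; nlinarith))).continuousWithinAt)
          (fun y hy => Real.hasDerivAt_rpow_const
            (Or.inl (by rcases hy with ⟨h1, _⟩; nlinarith)))
      have hξ0 : (0:ℝ) < ξ := lt_trans hi0 hξ.1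
      rw [add_sub_cancel_left, div_one] at hξ'
      have hbi : b i = 2 * ξ ^ (p - 1) := by
        rw [hbdef]
        simp only
        rw [← hξ']
        field_simp
      have hratio : (b / w) i = (ξ / (i:ℝ)) ^ (p - 1) := by
        have hip : (0:ℝ) < (i:ℝ) ^ (p - 1) := Real.rpow_pos_of_pos hi0 _
        simp only [Pi.div_apply, hbi, hwdef]
        rw [Real.div_rpow hξ0.le hi0.le]
        have h1a : (1:ℝ) - α = p - 1 := by rw [hpdef]; ring
        rw [h1a]
        field_simp
      have ht1 : 1 ≤ ξ / (i:ℝ) := (one_le_div hi0).2 hξ.1.le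
      have ht2 : ξ / (i:ℝ) ≤ ((i:ℝ) + 1) / ((i:ℝ) + 0) := by
        rw [add_zero]
        gcongr
        exact hξ.2.le
      have hq0 : (0:ℝ) < ξ / (i:ℝ) := by positivity
      rw [hratio]
      rcases le_or_gt 0 (p - 1) with hq | hq
      · first
        | exact le_trans (min_le_left _ _) (by
            calc (1:ℝ) = 1 ^ (p-1) := (Real.one_rpow _).symm
            _ ≤ (ξ / (i:ℝ)) ^ (p - 1) := Real.rpow_le_rpow zero_le_one ht1 hq)
        | exact le_trans (Real.rpow_le_rpow hq0.le ht2 hq) (le_max_right _ _)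
      · first
        | exact le_trans (min_le_right _ _)
            (Real.rpow_le_rpow_of_nonpos hq0 ht2 hq.le)
        | exact le_trans (Real.rpow_le_one_of_one_le_of_nonpos ht1 hq.le) (le_max_left _ _)
    }
  -- combine
  have hequiv : g ~[atTop] b := equiv1.trans equiv2.symm
  have hb0 : ∀ i, 0 ≤ b i := by
    intro i
    apply mul_nonneg (by positivity)
    have := Real.rpow_le_rpow (Nat.cast_nonneg i) (by linarith : (i:ℝ) ≤ (i:ℝ) + 1) hp.le
    linarith
  have hrpowtop : Tendsto (fun m : ℕ => (m:ℝ) ^ p) atTop atTop :=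
    (tendsto_rpow_atTop hp).comp tendsto_natCast_atTop_atTop
  have hbtop : Tendsto (fun n : ℕ => ∑ i ∈ range n, b i) atTop atTop := by
    have : Tendsto (fun m : ℕ => (2 / p) * (m:ℝ) ^ p) atTop atTop :=
      hrpowtop.const_mul_atTop (by positivity)
    exact this.congr fun m => (hbsum m).symm
  have hlo : (fun n => ∑ i ∈ range n, (g i - b i)) =o[atTop]
      fun n => ∑ i ∈ range n, b i := hequiv.isLittleO.sum_range hb0 hbtop
  have hfin : (fun n : ℕ => ∑ i ∈ range n, g i) ~[atTop]
      fun n : ℕ => (2 / p) * (n:ℝ) ^ p := by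
    have hbs : (fun n : ℕ => ∑ i ∈ range n, b i) = fun n : ℕ => (2 / p) * (n:ℝ) ^ p :=
      funext hbsum
    rw [IsEquivalent, ← hbs]
    have hfun : ((fun n : ℕ => ∑ i ∈ range n, g i) - fun n : ℕ => ∑ i ∈ range n, b i)
        = fun n : ℕ => ∑ i ∈ range n, (g i - b i) := by
      funext n; simp [Finset.sum_sub_distrib]
    rw [hfun]
    exact hlo
  have hne : ∀ᶠ n : ℕ in atTop, (2 / p) * (n:ℝ) ^ p ≠ 0 := by
    filter_upwards [eventually_ge_atTop 1] with n hn
    have : (0:ℝ) < (n:ℝ) := by exact_mod_cast hn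
    positivity
  have ht1 := (isEquivalent_iff_tendsto_one hne).1 hfin
  have ht2 : Tendsto (fun n : ℕ =>
      ((∑ i ∈ range n, g i) / ((2 / p) * (n:ℝ) ^ p)) * (2 / p)) atTop (𝓝 (1 * (2 / p))) :=
    ht1.mul_const _
  rw [one_mul] at ht2
  apply ht2.congr'
  filter_upwards [eventually_ge_atTop 1] with n hn
  have hn0 : (0:ℝ) < (n:ℝ) := by exact_mod_cast hn
  have hnp : (0:ℝ) < (n:ℝ) ^ p := Real.rpow_pos_of_pos hn0 p
  field_simp

end SlicerAux

section SlicerMain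
open Finset Asymptotics

theorem stmt_16 (α : ℝ) (hα : 0 < α) (hα2 : α < 2) (h : ℕ) (hh : 1 ≤ h) :
    Tendsto
      (fun m : ℕ => phi α (m + h) m / ((4 / (2 - α)) * (m : ℝ) ^ ((2 : ℝ) - α)))
      atTop (𝓝 1) := by
  have h2α : (0:ℝ) < 2 - α := by linarith
  set c : ℝ := (2 : ℝ) ^ (1/α) with hcdef
  have hc : 0 < c := Real.rpow_pos_of_pos two_pos _
  set C : ℝ := 4 / (2 - α) with hCdef
  have hC : 0 < C := by rw [hCdef]; positivity
  set F : ℕ → ℝ := fun j => ((j : ℝ) + c) ^ (-α) with hFdef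
  have hFpos : ∀ j : ℕ, 0 < F j := fun j => Real.rpow_pos_of_pos (by positivity) _
  have hDlt : ∀ j : ℕ, Dlt α (j + 1) = F j - F (j + 1) := by
    intro j
    simp only [Dlt, ellp, Nat.add_sub_cancel, hFdef, ← hcdef]
    push_cast
    ring
  have hFanti : ∀ j : ℕ, F (j + 1) ≤ F j := by
    intro j
    apply F_anti hα (by positivity : (0:ℝ) < (j : ℝ) + c)
    push_cast
    linarith
  -- sum over Icc 1 m
  have h1sum : ∀ m : ℕ, ∑ k ∈ Finset.Icc 1 m, (k : ℝ) ^ 2 * Dlt α k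
      = (∑ i ∈ range m, (2 * (i : ℝ) + 1) * F i) - (m : ℝ) ^ 2 * F m := by
    intro m
    rw [← Finset.Ico_add_one_right_eq_Icc, Finset.sum_Ico_eq_sum_range]
    have e0 : m + 1 - 1 = m := by omega
    rw [e0, ← abel_id F m]
    apply Finset.sum_congr rfl
    intro i _
    have e : 1 + i = i + 1 := by omega
    rw [e, hDlt i]
    push_cast
    ring
  -- sum over Icc (m+1) (m+h)
  have h2sum : ∀ m : ℕ, ∑ k ∈ Finset.Icc (m + 1) (m + h), (k : ℝ) * Dlt α k
      = ∑ i ∈ range h, ((m : ℝ) + 1 + (i : ℝ)) * (F (m + i) - F (m + i + 1)) := by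
    intro m
    rw [← Finset.Ico_add_one_right_eq_Icc, Finset.sum_Ico_eq_sum_range]
    have e2 : m + h + 1 - (m + 1) = h := by omega
    rw [e2]
    apply Finset.sum_congr rfl
    intro i _
    have e : m + 1 + i = (m + i) + 1 := by omega
    rw [e, hDlt (m + i)]
    push_cast
    ring
  -- tail tsum
  have h3sum : ∀ m : ℕ, ∑' k : ℕ, Dlt α (m + h + 1 + k) = F (m + h) := by
    intro m
    have e : ∀ k : ℕ, Dlt α (m + h + 1 + k) = F (m + h + k) - F (m + h + (k + 1)) := by
      intro k
      have e1 : m + h + 1 + k = (m + h + k) + 1 := by omega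
      have e2 : m + h + (k + 1) = m + h + k + 1 := by omega
      rw [e1, hDlt (m + h + k), e2]
    rw [tsum_congr e]
    have hlim : Tendsto (fun k : ℕ => F (m + h + k)) atTop (𝓝 0) := by
      have h1 : Tendsto (fun k : ℕ => (k : ℝ) + (((m : ℝ) + (h : ℝ)) + c)) atTop atTop :=
        tendsto_atTop_add_const_right _ _ tendsto_natCast_atTop_atTop
      have h2 := (tendsto_rpow_neg_atTop hα).comp h1
      apply h2.congr
      intro k
      simp only [Function.comp_apply, hFdef]
      congr 1
      push_cast
      ring
    have := tsum_telescope (G := fun k => F (m + h + k)) (fun k => hFanti (m + h + k)) hlim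
    simpa using this
  -- component limits
  have hU1 : Tendsto (fun m : ℕ =>
      2 * (∑ i ∈ range m, (2 * (i : ℝ) + 1) * F i) / (C * (m : ℝ) ^ ((2:ℝ) - α)))
      atTop (𝓝 1) := by
    have hk := (key_sum hα hα2 hc).mul_const (2 / C)
    have hval : 2 / (2 - α) * (2 / C) = 1 := by
      rw [hCdef]; field_simp; ring
    rw [hval] at hk
    apply hk.congr'
    filter_upwards [eventually_ge_atTop 1] with m hm
    have hm0 : (0:ℝ) < (m : ℝ) := by exact_mod_cast hm
    have hmp : (0:ℝ) < (m : ℝ) ^ ((2:ℝ) - α) := Real.rpow_pos_of_pos hm0 _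
    field_simp
    ring
  have hU2 : Tendsto (fun m : ℕ =>
      2 * (m : ℝ) ^ 2 * F m / (C * (m : ℝ) ^ ((2:ℝ) - α)))
      atTop (𝓝 ((2 - α) / 2)) := by
    have hk := (aux_rpow_ratio 0 c α).const_mul (2 / C)
    rw [mul_one] at hk
    have hval : 2 / C = (2 - α) / 2 := by rw [hCdef]; field_simp; ring
    rw [hval] at hk
    apply hk.congr'
    filter_upwards [eventually_ge_atTop 1] with m hm
    have hm0 : (0:ℝ) < (m : ℝ) := by exact_mod_cast hm
    have hmc : (0:ℝ) < (m : ℝ) + c := by linarith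
    have e1 : (((m:ℝ) + 0) / ((m:ℝ) + c)) ^ α = (m:ℝ) ^ α / ((m:ℝ) + c) ^ α := by
      rw [add_zero]; exact Real.div_rpow hm0.le hmc.le α
    have e2 : (m:ℝ) ^ ((2:ℝ) - α) = (m:ℝ) ^ 2 / (m:ℝ) ^ α := by
      rw [Real.rpow_sub hm0]
      congr 1
      rw [show ((2:ℝ)) = ((2:ℕ):ℝ) by norm_num, Real.rpow_natCast]
    have e3 : F m = (((m:ℝ) + c) ^ α)⁻¹ := by
      rw [hFdef]; simp only; rw [Real.rpow_neg hmc.le]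
    have hma : (0:ℝ) < (m:ℝ) ^ α := Real.rpow_pos_of_pos hm0 _
    have hmca : (0:ℝ) < ((m:ℝ) + c) ^ α := Real.rpow_pos_of_pos hmc _
    rw [e1, e2, e3]
    field_simp [hCdef, h2α.ne']
    linear_combination (by rw [hCdef]; exact div_mul_cancel₀ 4 h2α.ne' : C * (2 - α) = 4)
  have hU3 : Tendsto (fun m : ℕ =>
      2 * (m : ℝ) * ((m : ℝ) + (h : ℝ)) * F (m + h) / (C * (m : ℝ) ^ ((2:ℝ) - α)))
      atTop (𝓝 ((2 - α) / 2)) := by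
    have hk := ((aux_ratio h 0).mul (aux_rpow_ratio 0 ((h:ℝ) + c) α)).const_mul (2 / C)
    rw [mul_one, mul_one] at hk
    have hval : 2 / C = (2 - α) / 2 := by rw [hCdef]; field_simp; ring
    rw [hval] at hk
    apply hk.congr'
    filter_upwards [eventually_ge_atTop 1] with m hm
    have hm0 : (0:ℝ) < (m : ℝ) := by exact_mod_cast hm
    have hmhc : (0:ℝ) < (m : ℝ) + ((h:ℝ) + c) := by positivity
    have e1 : (((m:ℝ) + 0) / ((m:ℝ) + ((h:ℝ) + c))) ^ α
        = (m:ℝ) ^ α / ((m:ℝ) + ((h:ℝ) + c)) ^ α := by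
      rw [add_zero]; exact Real.div_rpow hm0.le hmhc.le α
    have e2 : (m:ℝ) ^ ((2:ℝ) - α) = (m:ℝ) ^ 2 / (m:ℝ) ^ α := by
      rw [Real.rpow_sub hm0]
      congr 1
      rw [show ((2:ℝ)) = ((2:ℕ):ℝ) by norm_num, Real.rpow_natCast]
    have e3 : F (m + h) = (((m:ℝ) + ((h:ℝ) + c)) ^ α)⁻¹ := by
      rw [hFdef]; simp only; rw [← Real.rpow_neg hmhc.le]
      congr 1
      push_cast
      ring
    have hma : (0:ℝ) < (m:ℝ) ^ α := Real.rpow_pos_of_pos hm0 _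
    have hmca : (0:ℝ) < ((m:ℝ) + ((h:ℝ) + c)) ^ α := Real.rpow_pos_of_pos hmhc _
    rw [e1, e2, e3]
    field_simp [hCdef, h2α.ne']
    linear_combination (m:ℝ) * (by rw [hCdef]; exact div_mul_cancel₀ 4 h2α.ne' : C * (2 - α) = 4)
  have hT2 : Tendsto (fun m : ℕ =>
      2 * (m : ℝ) * (∑ i ∈ range h, ((m : ℝ) + 1 + (i : ℝ)) * (F (m + i) - F (m + i + 1)))
        / (C * (m : ℝ) ^ ((2:ℝ) - α)))
      atTop (𝓝 0) := by
    have hupper : Tendsto (fun m : ℕ => (4 * α * (h:ℝ) / C) / (m : ℝ)) atTop (𝓝 0) :=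
      tendsto_const_nhds.div_atTop tendsto_natCast_atTop_atTop
    apply tendsto_of_tendsto_of_tendsto_of_le_of_le' tendsto_const_nhds hupper
    · filter_upwards [eventually_ge_atTop 1] with m hm
      have hm0 : (0:ℝ) < (m : ℝ) := by exact_mod_cast hm
      have hD : (0:ℝ) < C * (m : ℝ) ^ ((2:ℝ) - α) := by
        have := Real.rpow_pos_of_pos hm0 ((2:ℝ) - α); positivity
      apply div_nonneg _ hD.le
      apply mul_nonneg (by positivity)
      apply Finset.sum_nonneg
      intro i _
      apply mul_nonneg (by positivity)
      have := hFanti (m + i)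
      simp only [sub_nonneg]
      exact this
    · filter_upwards [eventually_ge_atTop (max 1 h)] with m hm
      have hm1 : 1 ≤ m := le_trans (le_max_left _ _) hm
      have hmh : h ≤ m := le_trans (le_max_right _ _) hm
      have hm0 : (0:ℝ) < (m : ℝ) := by exact_mod_cast hm1
      have hmhR : (h:ℝ) ≤ (m:ℝ) := by exact_mod_cast hmh
      set A : ℝ := (m:ℝ) ^ (-α - 1) with hAdef
      have hA : 0 < A := Real.rpow_pos_of_pos hm0 _
      have hsumle : (∑ i ∈ range h, ((m : ℝ) + 1 + (i : ℝ)) * (F (m + i) - F (m + i + 1)))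
          ≤ (h:ℝ) * (2 * (m:ℝ) * (α * A)) := by
        have hb : ∀ i ∈ range h,
            ((m:ℝ) + 1 + (i:ℝ)) * (F (m + i) - F (m + i + 1)) ≤ 2 * (m:ℝ) * (α * A) := by
          intro i hi
          have hih : i < h := Finset.mem_range.1 hi
          have hiR : (i:ℝ) + 1 ≤ (h:ℝ) := by exact_mod_cast hih
          have hcoef : (m:ℝ) + 1 + (i:ℝ) ≤ 2 * (m:ℝ) := by linarith
          have hdiff0 : 0 ≤ F (m + i) - F (m + i + 1) := sub_nonneg.2 (hFanti (m + i))
          have hdiff : F (m + i) - F (m + i + 1) ≤ α * A := by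
            have hx : (0:ℝ) < ((m + i : ℕ):ℝ) + c := by positivity
            have hmvt := mvt_bound hα hx
            have ee0 : F (m + i) = (((m + i : ℕ):ℝ) + c) ^ (-α) := by rw [hFdef]
            have ee : F (m + i + 1) = (((m + i : ℕ):ℝ) + c + 1) ^ (-α) := by
              rw [hFdef]
              simp only
              congr 1
              push_cast
              ring
            have h2 : (((m + i : ℕ):ℝ) + c) ^ (-α - 1) ≤ A := by
              rw [hAdef]
              apply Real.rpow_le_rpow_of_nonpos hm0 _ (by linarith)
              push_cast
              linarith [Nat.cast_nonneg (α := ℝ) i]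
            rw [ee0, ee]
            calc ((((m + i : ℕ):ℝ) + c) ^ (-α) - ((((m + i : ℕ):ℝ) + c) + 1) ^ (-α))
                ≤ α * (((m + i : ℕ):ℝ) + c) ^ (-α - 1) := hmvt
              _ ≤ α * A := mul_le_mul_of_nonneg_left h2 hα.le
          calc ((m:ℝ) + 1 + (i:ℝ)) * (F (m + i) - F (m + i + 1))
              ≤ 2 * (m:ℝ) * (F (m + i) - F (m + i + 1)) :=
                mul_le_mul_of_nonneg_right hcoef hdiff0
            _ ≤ 2 * (m:ℝ) * (α * A) :=
                mul_le_mul_of_nonneg_left hdiff (by positivity)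
        calc (∑ i ∈ range h, ((m : ℝ) + 1 + (i : ℝ)) * (F (m + i) - F (m + i + 1)))
            ≤ ∑ _i ∈ range h, 2 * (m:ℝ) * (α * A) := Finset.sum_le_sum hb
          _ = (h:ℝ) * (2 * (m:ℝ) * (α * A)) := by
              rw [Finset.sum_const, Finset.card_range, nsmul_eq_mul]
      calc 2 * (m : ℝ) * (∑ i ∈ range h, ((m : ℝ) + 1 + (i : ℝ)) * (F (m + i) - F (m + i + 1)))
            / (C * (m : ℝ) ^ ((2:ℝ) - α))
          ≤ 2 * (m : ℝ) * ((h:ℝ) * (2 * (m:ℝ) * (α * A))) / (C * (m : ℝ) ^ ((2:ℝ) - α)) := by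
            have hD : (0:ℝ) < C * (m : ℝ) ^ ((2:ℝ) - α) := by
              have := Real.rpow_pos_of_pos hm0 ((2:ℝ) - α); positivity
            gcongr
        _ = 4 * α * (h:ℝ) / C / (m : ℝ) := by
            have em : (m:ℝ) ^ ((2:ℝ) - α) = A * (m:ℝ) ^ (3:ℕ) := by
              rw [hAdef, ← Real.rpow_natCast (m:ℝ) 3, ← Real.rpow_add hm0]
              congr 1
              push_cast
              ring
            rw [em]
            field_simp
            ring
  -- final combination
  have hcomb := ((hU1.sub hU2).add hT2).add hU3
  have hone : 1 - (2 - α) / 2 + 0 + (2 - α) / 2 = 1 := by ring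
  rw [hone] at hcomb
  apply hcomb.congr'
  filter_upwards [eventually_ge_atTop 1] with m hm
  have hm0 : (0:ℝ) < (m : ℝ) := by exact_mod_cast hm
  have hmp : (0:ℝ) < (m : ℝ) ^ ((2:ℝ) - α) := Real.rpow_pos_of_pos hm0 _
  rw [phi, h1sum m, h2sum m, h3sum m]
  push_cast
  field_simp

end SlicerMain
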